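/- For jointly distributed finite random variables where the inputs X_1, …, X_n are conditionally independent given S, the set function h_2(A) := H(Y, Y_A | X_{A}, S) (entropy of a fixed output Y together with outputs indexed by A, conditioned on inputs indexed by A and S) is submodular in A ⊆ [1:n]. -/

import Mathlib

open scoped BigOperators

/-- Probability mass of `f ω = b` under the pmf `p` on the finite sample space `Ω`. -/
noncomputable def pdist {Ω β : Type*} [Fintype Ω] [DecidableEq β]
    (p : Ω → ℝ) (f : Ω → β) (b : β) : ℝ :=
  ∑ ω, if f ω = b then p ω else 0

/-- Shannon entropy of the finite-valued random variable `f` under the pmf `p`. -/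
noncomputable def entropy {Ω β : Type*} [Fintype Ω] [Fintype β] [DecidableEq β]
    (p : Ω → ℝ) (f : Ω → β) : ℝ :=
  -∑ b, pdist p f b * Real.log (pdist p f b)

/-- Conditional Shannon entropy `H(f | g)`. -/
noncomputable def condEntropy {Ω β γ : Type*} [Fintype Ω] [Fintype β] [DecidableEq β]
    [Fintype γ] [DecidableEq γ] (p : Ω → ℝ) (f : Ω → β) (g : Ω → γ) : ℝ :=
  entropy p (fun ω => (f ω, g ω)) - entropy p g

/-- Conditional mutual information `I(f ; g | h)`. -/
noncomputable def condMI {Ω β γ δ : Type*} [Fintype Ω] [Fintype β] [DecidableEq β]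
    [Fintype γ] [DecidableEq γ] [Fintype δ] [DecidableEq δ]
    (p : Ω → ℝ) (f : Ω → β) (g : Ω → γ) (h : Ω → δ) : ℝ :=
  condEntropy p f h + condEntropy p g h - condEntropy p (fun ω => (f ω, g ω)) h

/-- The tuple of random variables `{X i : i ∈ A}`, encoded as a masked vector. -/
def masked {Ω 𝒳 : Type*} {n : ℕ} (X : Fin n → Ω → 𝒳) (A : Finset (Fin n)) (ω : Ω) :
    Fin n → Option 𝒳 :=
  fun i => if i ∈ A then some (X i ω) else none

section auxlemmas
open Real
variable {Ω β γ δ : Type*} [Fintype Ω]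

lemma pdist_nonneg [DecidableEq β] (p : Ω → ℝ) (hp0 : ∀ ω, 0 ≤ p ω) (f : Ω → β) (b : β) :
    0 ≤ pdist p f b := by
  unfold pdist
  exact Finset.sum_nonneg fun ω _ => by split_ifs; exacts [hp0 ω, le_rfl]

lemma pdist_sum_eq_one [Fintype β] [DecidableEq β] (p : Ω → ℝ) (hp1 : ∑ ω, p ω = 1)
    (f : Ω → β) : ∑ b, pdist p f b = 1 := by
  unfold pdist
  rw [Finset.sum_comm]
  simp only [Finset.sum_ite_eq, Finset.mem_univ, if_true]
  exact hp1

lemma pdist_marg_snd [Fintype β] [DecidableEq β] [Fintype γ] [DecidableEq γ] [Fintype δ]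
    [DecidableEq δ] (p : Ω → ℝ) (f : Ω → β) (g : Ω → γ) (h : Ω → δ) (x : β) (z : δ) :
    pdist p (fun ω => (f ω, h ω)) (x, z) = ∑ y, pdist p (fun ω => (f ω, g ω, h ω)) (x, y, z) := by
  unfold pdist
  rw [Finset.sum_comm]
  refine Finset.sum_congr rfl fun ω _ => ?_
  by_cases h1 : f ω = x <;> by_cases h2 : h ω = z <;>
    simp [Prod.ext_iff, h1, h2, Finset.sum_ite_eq]

lemma pdist_marg_fst [Fintype β] [DecidableEq β] [Fintype γ] [DecidableEq γ] [Fintype δ]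
    [DecidableEq δ] (p : Ω → ℝ) (f : Ω → β) (g : Ω → γ) (h : Ω → δ) (y : γ) (z : δ) :
    pdist p (fun ω => (g ω, h ω)) (y, z) = ∑ x, pdist p (fun ω => (f ω, g ω, h ω)) (x, y, z) := by
  unfold pdist
  rw [Finset.sum_comm]
  refine Finset.sum_congr rfl fun ω _ => ?_
  by_cases h1 : g ω = y <;> by_cases h2 : h ω = z <;>
    simp [Prod.ext_iff, h1, h2, Finset.sum_ite_eq]

lemma pdist_marg_one [Fintype β] [DecidableEq β] [Fintype δ]
    [DecidableEq δ] (p : Ω → ℝ) (f : Ω → β) (h : Ω → δ) (z : δ) :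
    pdist p h z = ∑ x, pdist p (fun ω => (f ω, h ω)) (x, z) := by
  unfold pdist
  rw [Finset.sum_comm]
  refine Finset.sum_congr rfl fun ω _ => ?_
  by_cases h2 : h ω = z <;> simp [Prod.ext_iff, h2, Finset.sum_ite_eq]

lemma pdist_marg_both [Fintype β] [DecidableEq β] [Fintype γ] [DecidableEq γ] [Fintype δ]
    [DecidableEq δ] (p : Ω → ℝ) (f : Ω → β) (g : Ω → γ) (h : Ω → δ) (z : δ) :
    pdist p h z = ∑ x, ∑ y, pdist p (fun ω => (f ω, g ω, h ω)) (x, y, z) := by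
  rw [pdist_marg_one p f h z]
  exact Finset.sum_congr rfl fun x _ => pdist_marg_snd p f g h x z

end auxlemmas
section auxlemmas2
open Real
variable {Ω β γ δ : Type*} [Fintype Ω]

lemma entropy_comp_inj [Fintype β] [DecidableEq β] [Fintype γ] [DecidableEq γ]
    (p : Ω → ℝ) (f : Ω → β) (g : Ω → γ) (φ : β → γ) (hφ : Function.Injective φ)
    (hfg : ∀ ω, g ω = φ (f ω)) : entropy p g = entropy p f := by
  have hpd : ∀ b, pdist p g (φ b) = pdist p f b := by
    intro b; unfold pdist
    refine Finset.sum_congr rfl fun ω _ => ?_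
    rw [hfg ω]
    simp [hφ.eq_iff]
  have hz : ∀ c, c ∉ Finset.image φ Finset.univ → pdist p g c = 0 := by
    intro c hc
    unfold pdist
    refine Finset.sum_eq_zero fun ω _ => ?_
    rw [hfg ω, if_neg]
    intro hcontra
    exact hc (Finset.mem_image.mpr ⟨f ω, Finset.mem_univ _, hcontra⟩)
  unfold entropy
  congr 1
  rw [← Finset.sum_subset (Finset.subset_univ (Finset.image φ Finset.univ))]
  · rw [Finset.sum_image (fun a _ b _ h => hφ h)]
    exact Finset.sum_congr rfl fun b _ => by rw [hpd]
  · intro c _ hc; rw [hz c hc]; simp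

lemma entropy_eq_of_inv [Fintype β] [DecidableEq β] [Fintype γ] [DecidableEq γ]
    (p : Ω → ℝ) (f : Ω → β) (g : Ω → γ) (u : β → γ) (v : γ → β)
    (hu : ∀ ω, u (f ω) = g ω) (hv : ∀ ω, v (g ω) = f ω) :
    entropy p f = entropy p g := by
  have h1 : entropy p (fun ω => (f ω, g ω)) = entropy p f :=
    entropy_comp_inj p f _ (fun b => (b, u b))
      (fun a b hab => congrArg Prod.fst hab) (fun ω => by simp [hu ω])
  have h2 : entropy p (fun ω => (g ω, f ω)) = entropy p g :=
    entropy_comp_inj p g _ (fun c => (c, v c))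
      (fun a b hab => congrArg Prod.fst hab) (fun ω => by simp [hv ω])
  have h3 : entropy p (fun ω => (f ω, g ω)) = entropy p (fun ω => (g ω, f ω)) :=
    entropy_comp_inj p _ _ Prod.swap Prod.swap_injective (fun ω => rfl)
  linarith

lemma condMI_eq [Fintype β] [DecidableEq β] [Fintype γ] [DecidableEq γ] [Fintype δ]
    [DecidableEq δ] (p : Ω → ℝ) (f : Ω → β) (g : Ω → γ) (h : Ω → δ) :
    condMI p f g h = entropy p (fun ω => (f ω, h ω)) + entropy p (fun ω => (g ω, h ω))
      - entropy p (fun ω => ((f ω, g ω), h ω)) - entropy p h := by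
  unfold condMI condEntropy
  ring

end auxlemmas2
section auxlemmas3
open Real
variable {Ω β γ δ : Type*} [Fintype Ω]

lemma condMI_nonneg [Fintype β] [DecidableEq β] [Fintype γ] [DecidableEq γ] [Fintype δ]
    [DecidableEq δ] (p : Ω → ℝ) (hp0 : ∀ ω, 0 ≤ p ω) (hp1 : ∑ ω, p ω = 1)
    (f : Ω → β) (g : Ω → γ) (h : Ω → δ) : 0 ≤ condMI p f g h := by
  classical
  set q : β × γ × δ → ℝ := pdist p (fun ω => (f ω, g ω, h ω)) with hqdef
  set a : β × δ → ℝ := pdist p (fun ω => (f ω, h ω)) with hadef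
  set b : γ × δ → ℝ := pdist p (fun ω => (g ω, h ω)) with hbdef
  set c : δ → ℝ := pdist p h with hcdef
  have hq0 : ∀ w, 0 ≤ q w := fun w => pdist_nonneg p hp0 _ w
  have ha0 : ∀ w, 0 ≤ a w := fun w => pdist_nonneg p hp0 _ w
  have hb0 : ∀ w, 0 ≤ b w := fun w => pdist_nonneg p hp0 _ w
  have hc0 : ∀ z, 0 ≤ c z := fun z => pdist_nonneg p hp0 _ z
  have haq : ∀ x z, a (x, z) = ∑ y, q (x, y, z) := fun x z => pdist_marg_snd p f g h x z
  have hbq : ∀ y z, b (y, z) = ∑ x, q (x, y, z) := fun y z => pdist_marg_fst p f g h y z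
  have hcq : ∀ z, c z = ∑ x, ∑ y, q (x, y, z) := fun z => pdist_marg_both p f g h z
  have hq1 : ∑ w, q w = 1 := pdist_sum_eq_one p hp1 _
  have hqa : ∀ x y z, q (x, y, z) ≤ a (x, z) := by
    intro x y z
    rw [haq]
    exact Finset.single_le_sum (f := fun y' => q (x, y', z)) (fun y' _ => hq0 _) (Finset.mem_univ y)
  have hqb : ∀ x y z, q (x, y, z) ≤ b (y, z) := by
    intro x y z
    rw [hbq]
    exact Finset.single_le_sum (f := fun x' => q (x', y, z)) (fun x' _ => hq0 _) (Finset.mem_univ x)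
  have hqc : ∀ x y z, q (x, y, z) ≤ c z := by
    intro x y z
    rw [hcq]
    calc q (x, y, z) ≤ ∑ y', q (x, y', z) :=
          Finset.single_le_sum (f := fun y' => q (x, y', z)) (fun y' _ => hq0 _)
            (Finset.mem_univ y)
      _ ≤ ∑ x', ∑ y', q (x', y', z) :=
          Finset.single_le_sum (f := fun x' => ∑ y', q (x', y', z))
            (fun x' _ => Finset.sum_nonneg fun _ _ => hq0 _) (Finset.mem_univ x)
  have hac : ∀ z, ∑ x, a (x, z) = c z := by
    intro z
    rw [hcq]
    exact Finset.sum_congr rfl fun x _ => haq x z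
  have hbc : ∀ z, ∑ y, b (y, z) = c z := by
    intro z
    rw [hcq, Finset.sum_comm]
    exact Finset.sum_congr rfl fun y _ => hbq y z
  -- express condMI as a single sum
  have hassoc : entropy p (fun ω => ((f ω, g ω), h ω)) = entropy p (fun ω => (f ω, g ω, h ω)) :=
    entropy_comp_inj p _ _ (fun w : β × γ × δ => ((w.1, w.2.1), w.2.2))
      (fun w w' hww' => by
        obtain ⟨x, y, z⟩ := w; obtain ⟨x', y', z'⟩ := w'
        simpa [Prod.ext_iff, and_assoc] using hww')
      (fun ω => rfl)
  have hrot : ∀ F : β → γ → δ → ℝ,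
      (∑ x, ∑ y, ∑ z, F x y z) = ∑ z, ∑ x, ∑ y, F x y z := by
    intro F
    calc (∑ x, ∑ y, ∑ z, F x y z) = ∑ x, ∑ z, ∑ y, F x y z :=
          Finset.sum_congr rfl fun x _ => Finset.sum_comm
      _ = ∑ z, ∑ x, ∑ y, F x y z := Finset.sum_comm
  have hrot2 : ∀ F : β → γ → δ → ℝ,
      (∑ x, ∑ y, ∑ z, F x y z) = ∑ y, ∑ z, ∑ x, F x y z := by
    intro F
    calc (∑ x, ∑ y, ∑ z, F x y z) = ∑ y, ∑ x, ∑ z, F x y z := Finset.sum_comm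
      _ = ∑ y, ∑ z, ∑ x, F x y z := Finset.sum_congr rfl fun y _ => Finset.sum_comm
  have SA : ∑ w : β × δ, a w * Real.log (a w)
      = ∑ w : β × γ × δ, q w * Real.log (a (w.1, w.2.2)) := by
    simp only [Fintype.sum_prod_type]
    refine Finset.sum_congr rfl fun x _ => ?_
    conv_rhs => rw [Finset.sum_comm]
    refine Finset.sum_congr rfl fun z _ => ?_
    rw [haq x z, Finset.sum_mul]
  have SB : ∑ w : γ × δ, b w * Real.log (b w)
      = ∑ w : β × γ × δ, q w * Real.log (b (w.2.1, w.2.2)) := by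
    simp only [Fintype.sum_prod_type]
    conv_rhs => rw [hrot2 (fun x y z => q (x, y, z) * Real.log (b (y, z)))]
    refine Finset.sum_congr rfl fun y _ => ?_
    refine Finset.sum_congr rfl fun z _ => ?_
    rw [hbq y z, Finset.sum_mul]
  have SC : ∑ z, c z * Real.log (c z)
      = ∑ w : β × γ × δ, q w * Real.log (c w.2.2) := by
    simp only [Fintype.sum_prod_type]
    conv_rhs => rw [hrot (fun x y z => q (x, y, z) * Real.log (c z))]
    refine Finset.sum_congr rfl fun z _ => ?_
    rw [hcq z, Finset.sum_mul]
    refine Finset.sum_congr rfl fun x _ => ?_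
    rw [Finset.sum_mul]
  have hent : condMI p f g h
      = ∑ w : β × γ × δ, q w * (Real.log (q w) + Real.log (c w.2.2)
          - Real.log (a (w.1, w.2.2)) - Real.log (b (w.2.1, w.2.2))) := by
    rw [condMI_eq, hassoc]
    unfold entropy
    rw [← hqdef, ← hadef, ← hbdef, ← hcdef, SA, SB, SC]
    have habcd : ∀ s t u v : ℝ, -s + -t - -u - -v = u + v - s - t := by intros; ring
    rw [habcd]
    rw [← Finset.sum_add_distrib, ← Finset.sum_sub_distrib, ← Finset.sum_sub_distrib]
    exact Finset.sum_congr rfl fun w _ => by ring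
  -- termwise lower bound
  have hterm : ∀ x y z, q (x, y, z) - a (x, z) * b (y, z) / c z
      ≤ q (x, y, z) * (Real.log (q (x, y, z)) + Real.log (c z)
          - Real.log (a (x, z)) - Real.log (b (y, z))) := by
    intro x y z
    rcases eq_or_lt_of_le (hq0 (x, y, z)) with hQ | hQ
    · rw [← hQ, zero_mul, zero_sub, neg_nonpos]
      exact div_nonneg (mul_nonneg (ha0 _) (hb0 _)) (hc0 z)
    · have hA : 0 < a (x, z) := lt_of_lt_of_le hQ (hqa x y z)
      have hB : 0 < b (y, z) := lt_of_lt_of_le hQ (hqb x y z)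
      have hC : 0 < c z := lt_of_lt_of_le hQ (hqc x y z)
      have hR : 0 < a (x, z) * b (y, z) / c z := by positivity
      have hlog := Real.log_le_sub_one_of_pos
        (show 0 < a (x, z) * b (y, z) / c z / q (x, y, z) by positivity)
      have hexp : Real.log (a (x, z) * b (y, z) / c z / q (x, y, z))
          = Real.log (a (x, z)) + Real.log (b (y, z)) - Real.log (c z)
            - Real.log (q (x, y, z)) := by
        rw [Real.log_div (ne_of_gt hR) (ne_of_gt hQ),
          Real.log_div (by positivity) (ne_of_gt hC),
          Real.log_mul (ne_of_gt hA) (ne_of_gt hB)]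
      rw [hexp] at hlog
      have hmul := mul_le_mul_of_nonneg_left hlog (le_of_lt hQ)
      have hcan : q (x, y, z) * (a (x, z) * b (y, z) / c z / q (x, y, z) - 1)
          = a (x, z) * b (y, z) / c z - q (x, y, z) := by
        field_simp
      rw [hcan] at hmul
      have hneg : q (x, y, z) * (Real.log (q (x, y, z)) + Real.log (c z)
            - Real.log (a (x, z)) - Real.log (b (y, z)))
          = -(q (x, y, z) * (Real.log (a (x, z)) + Real.log (b (y, z))
            - Real.log (c z) - Real.log (q (x, y, z)))) := by ring
      rw [hneg]
      linarith
  -- sum of the ratio terms equals one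
  have hr : ∑ w : β × γ × δ, a (w.1, w.2.2) * b (w.2.1, w.2.2) / c w.2.2 = 1 := by
    simp only [Fintype.sum_prod_type]
    rw [hrot (fun x y z => a (x, z) * b (y, z) / c z)]
    have hz : ∀ z, (∑ x, ∑ y, a (x, z) * b (y, z) / c z) = c z := by
      intro z
      have hxy : ∀ x', (∑ y, a (x', z) * b (y, z) / c z) = a (x', z) * (c z / c z) := by
        intro x'
        rw [← hbc z, ← Finset.sum_div, ← Finset.mul_sum, mul_div_assoc]
      rcases eq_or_ne (c z) 0 with hcz | hcz
      · have : ∀ x', (∑ y, a (x', z) * b (y, z) / c z) = 0 := by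
          intro x'; rw [hxy x', hcz, div_zero, mul_zero]
        rw [Finset.sum_congr rfl fun x' _ => this x', Finset.sum_const, smul_zero, hcz]
      · have : ∀ x', (∑ y, a (x', z) * b (y, z) / c z) = a (x', z) := by
          intro x'; rw [hxy x', div_self hcz, mul_one]
        rw [Finset.sum_congr rfl fun x' _ => this x', hac z]
    rw [Finset.sum_congr rfl fun z _ => hz z]
    exact pdist_sum_eq_one p hp1 h
  calc (0 : ℝ) = (∑ w : β × γ × δ, q w)
        - ∑ w : β × γ × δ, a (w.1, w.2.2) * b (w.2.1, w.2.2) / c w.2.2 := by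
        rw [hq1, hr]; ring
    _ = ∑ w : β × γ × δ, (q w - a (w.1, w.2.2) * b (w.2.1, w.2.2) / c w.2.2) :=
        by rw [Finset.sum_sub_distrib]
    _ ≤ ∑ w : β × γ × δ, q w * (Real.log (q w) + Real.log (c w.2.2)
          - Real.log (a (w.1, w.2.2)) - Real.log (b (w.2.1, w.2.2))) :=
        Finset.sum_le_sum fun w _ => hterm w.1 w.2.1 w.2.2
    _ = condMI p f g h := hent.symm
end auxlemmas3
section maskedlemmas
variable {Ω 𝒳 : Type*} {n : ℕ}

lemma masked_comb2 (X : Fin n → Ω → 𝒳) (A B : Finset (Fin n)) (ω : Ω) :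
    (fun i => if i ∈ A \ B then masked X (A \ B) ω i else masked X (A ∩ B) ω i)
      = masked X A ω := by
  funext i
  by_cases h1 : i ∈ A <;> by_cases h2 : i ∈ B <;> simp [masked, h1, h2]

lemma masked_comb2b (X : Fin n → Ω → 𝒳) (A B : Finset (Fin n)) (ω : Ω) :
    (fun i => if i ∈ B \ A then masked X (B \ A) ω i else masked X (A ∩ B) ω i)
      = masked X B ω := by
  funext i
  by_cases h1 : i ∈ A <;> by_cases h2 : i ∈ B <;> simp [masked, h1, h2]

lemma masked_comb3 (X : Fin n → Ω → 𝒳) (A B : Finset (Fin n)) (ω : Ω) :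
    (fun i => if i ∈ A \ B then masked X (A \ B) ω i
      else if i ∈ B \ A then masked X (B \ A) ω i else masked X (A ∩ B) ω i)
      = masked X (A ∪ B) ω := by
  funext i
  by_cases h1 : i ∈ A <;> by_cases h2 : i ∈ B <;> simp [masked, h1, h2]

lemma masked_restrict (X : Fin n → Ω → 𝒳) {A B : Finset (Fin n)} (hBA : B ⊆ A) (ω : Ω) :
    (fun i => if i ∈ B then masked X A ω i else none) = masked X B ω := by
  funext i
  by_cases h : i ∈ B
  · simp [masked, h, hBA h]
  · simp [masked, h]

end maskedlemmas

set_option synthInstance.maxSize 1024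

/-- If the inputs `X₁,…,Xₙ` are conditionally independent given `S`, then the set
function `h₂(A) := H(Y, Y_A | X_A, S)` is submodular in `A ⊆ [1:n]`. -/
theorem independent_inputs_submodular {Ω 𝒳 𝒴 𝒮 : Type*} [Fintype Ω]
    [Fintype 𝒳] [DecidableEq 𝒳] [Fintype 𝒴] [DecidableEq 𝒴]
    [Fintype 𝒮] [DecidableEq 𝒮] {n : ℕ}
    (p : Ω → ℝ) (hp0 : ∀ ω, 0 ≤ p ω) (hp1 : ∑ ω, p ω = 1)
    (X : Fin n → Ω → 𝒳) (Ys : Fin n → Ω → 𝒴) (Y : Ω → 𝒴) (S : Ω → 𝒮)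
    (hindep : ∀ A₁ A₂ : Finset (Fin n),
      condMI p (masked X (A₁ \ A₂)) (masked X (A₂ \ A₁))
        (fun ω => (S ω, masked X (A₁ ∩ A₂) ω)) = 0) :
    ∀ A₁ A₂ : Finset (Fin n),
      condEntropy p (fun ω => (Y ω, masked Ys (A₁ ∪ A₂) ω))
          (fun ω => (masked X (A₁ ∪ A₂) ω, S ω))
        + condEntropy p (fun ω => (Y ω, masked Ys (A₁ ∩ A₂) ω))
          (fun ω => (masked X (A₁ ∩ A₂) ω, S ω))
      ≤ condEntropy p (fun ω => (Y ω, masked Ys A₁ ω)) (fun ω => (masked X A₁ ω, S ω))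
        + condEntropy p (fun ω => (Y ω, masked Ys A₂ ω)) (fun ω => (masked X A₂ ω, S ω)) := by
  intro A₁ A₂
  have hsub1 : A₁ \ A₂ ⊆ A₁ ∪ A₂ := Finset.sdiff_subset.trans Finset.subset_union_left
  have hsub2 : A₂ \ A₁ ⊆ A₁ ∪ A₂ := Finset.sdiff_subset.trans Finset.subset_union_right
  have hsub3 : A₁ ∩ A₂ ⊆ A₁ ∪ A₂ := Finset.inter_subset_left.trans Finset.subset_union_left
  have h1 : 0 ≤ condMI p
      (fun ω => (masked Ys (A₁ \ A₂) ω, masked X (A₁ \ A₂) ω))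
      (fun ω => (masked Ys (A₂ \ A₁) ω, masked X (A₂ \ A₁) ω))
      (fun ω => ((Y ω, masked Ys (A₁ ∩ A₂) ω), (masked X (A₁ ∩ A₂) ω, S ω))) :=
    condMI_nonneg p hp0 hp1 _ _ _
  simp only [condMI_eq] at h1
  have h2 := hindep A₁ A₂
  simp only [condMI_eq] at h2
  have e1 : entropy p (fun ω => ((masked Ys (A₁ \ A₂) ω, masked X (A₁ \ A₂) ω),
        ((Y ω, masked Ys (A₁ ∩ A₂) ω), (masked X (A₁ ∩ A₂) ω, S ω))))
      = entropy p (fun ω => ((Y ω, masked Ys A₁ ω), (masked X A₁ ω, S ω))) := by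
    refine entropy_eq_of_inv p _ _
      (fun w => ((w.2.1.1, fun i => if i ∈ A₁ \ A₂ then w.1.1 i else w.2.1.2 i),
        (fun i => if i ∈ A₁ \ A₂ then w.1.2 i else w.2.2.1 i, w.2.2.2)))
      (fun w => ((fun i => if i ∈ A₁ \ A₂ then w.1.2 i else none,
          fun i => if i ∈ A₁ \ A₂ then w.2.1 i else none),
        ((w.1.1, fun i => if i ∈ A₁ ∩ A₂ then w.1.2 i else none),
          (fun i => if i ∈ A₁ ∩ A₂ then w.2.1 i else none, w.2.2)))) ?_ ?_
    · intro ω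
      exact Prod.ext (Prod.ext rfl (masked_comb2 Ys A₁ A₂ ω))
        (Prod.ext (masked_comb2 X A₁ A₂ ω) rfl)
    · intro ω
      exact Prod.ext
        (Prod.ext (masked_restrict Ys Finset.sdiff_subset ω)
          (masked_restrict X Finset.sdiff_subset ω))
        (Prod.ext (Prod.ext rfl (masked_restrict Ys Finset.inter_subset_left ω))
          (Prod.ext (masked_restrict X Finset.inter_subset_left ω) rfl))
  have e2 : entropy p (fun ω => ((masked Ys (A₂ \ A₁) ω, masked X (A₂ \ A₁) ω),
        ((Y ω, masked Ys (A₁ ∩ A₂) ω), (masked X (A₁ ∩ A₂) ω, S ω))))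
      = entropy p (fun ω => ((Y ω, masked Ys A₂ ω), (masked X A₂ ω, S ω))) := by
    refine entropy_eq_of_inv p _ _
      (fun w => ((w.2.1.1, fun i => if i ∈ A₂ \ A₁ then w.1.1 i else w.2.1.2 i),
        (fun i => if i ∈ A₂ \ A₁ then w.1.2 i else w.2.2.1 i, w.2.2.2)))
      (fun w => ((fun i => if i ∈ A₂ \ A₁ then w.1.2 i else none,
          fun i => if i ∈ A₂ \ A₁ then w.2.1 i else none),
        ((w.1.1, fun i => if i ∈ A₁ ∩ A₂ then w.1.2 i else none),
          (fun i => if i ∈ A₁ ∩ A₂ then w.2.1 i else none, w.2.2)))) ?_ ?_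
    · intro ω
      exact Prod.ext (Prod.ext rfl (masked_comb2b Ys A₁ A₂ ω))
        (Prod.ext (masked_comb2b X A₁ A₂ ω) rfl)
    · intro ω
      exact Prod.ext
        (Prod.ext (masked_restrict Ys Finset.sdiff_subset ω)
          (masked_restrict X Finset.sdiff_subset ω))
        (Prod.ext (Prod.ext rfl (masked_restrict Ys Finset.inter_subset_right ω))
          (Prod.ext (masked_restrict X Finset.inter_subset_right ω) rfl))
  have e3 : entropy p (fun ω => (((masked Ys (A₁ \ A₂) ω, masked X (A₁ \ A₂) ω),
        (masked Ys (A₂ \ A₁) ω, masked X (A₂ \ A₁) ω)),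
        ((Y ω, masked Ys (A₁ ∩ A₂) ω), (masked X (A₁ ∩ A₂) ω, S ω))))
      = entropy p (fun ω => ((Y ω, masked Ys (A₁ ∪ A₂) ω),
          (masked X (A₁ ∪ A₂) ω, S ω))) := by
    refine entropy_eq_of_inv p _ _
      (fun w => ((w.2.1.1, fun i => if i ∈ A₁ \ A₂ then w.1.1.1 i
          else if i ∈ A₂ \ A₁ then w.1.2.1 i else w.2.1.2 i),
        (fun i => if i ∈ A₁ \ A₂ then w.1.1.2 i
          else if i ∈ A₂ \ A₁ then w.1.2.2 i else w.2.2.1 i, w.2.2.2)))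
      (fun w => (((fun i => if i ∈ A₁ \ A₂ then w.1.2 i else none,
          fun i => if i ∈ A₁ \ A₂ then w.2.1 i else none),
          (fun i => if i ∈ A₂ \ A₁ then w.1.2 i else none,
          fun i => if i ∈ A₂ \ A₁ then w.2.1 i else none)),
        ((w.1.1, fun i => if i ∈ A₁ ∩ A₂ then w.1.2 i else none),
          (fun i => if i ∈ A₁ ∩ A₂ then w.2.1 i else none, w.2.2)))) ?_ ?_
    · intro ω
      exact Prod.ext (Prod.ext rfl (masked_comb3 Ys A₁ A₂ ω))
        (Prod.ext (masked_comb3 X A₁ A₂ ω) rfl)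
    · intro ω
      exact Prod.ext
        (Prod.ext (Prod.ext (masked_restrict Ys hsub1 ω) (masked_restrict X hsub1 ω))
          (Prod.ext (masked_restrict Ys hsub2 ω) (masked_restrict X hsub2 ω)))
        (Prod.ext (Prod.ext rfl (masked_restrict Ys hsub3 ω))
          (Prod.ext (masked_restrict X hsub3 ω) rfl))
  have e5 : entropy p (fun ω => (masked X (A₁ \ A₂) ω, (S ω, masked X (A₁ ∩ A₂) ω)))
      = entropy p (fun ω => (masked X A₁ ω, S ω)) := by
    refine entropy_eq_of_inv p _ _
      (fun w => (fun i => if i ∈ A₁ \ A₂ then w.1 i else w.2.2 i, w.2.1))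
      (fun w => (fun i => if i ∈ A₁ \ A₂ then w.1 i else none,
        (w.2, fun i => if i ∈ A₁ ∩ A₂ then w.1 i else none))) ?_ ?_
    · intro ω
      exact Prod.ext (masked_comb2 X A₁ A₂ ω) rfl
    · intro ω
      exact Prod.ext (masked_restrict X Finset.sdiff_subset ω)
        (Prod.ext rfl (masked_restrict X Finset.inter_subset_left ω))
  have e6 : entropy p (fun ω => (masked X (A₂ \ A₁) ω, (S ω, masked X (A₁ ∩ A₂) ω)))
      = entropy p (fun ω => (masked X A₂ ω, S ω)) := by
    refine entropy_eq_of_inv p _ _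
      (fun w => (fun i => if i ∈ A₂ \ A₁ then w.1 i else w.2.2 i, w.2.1))
      (fun w => (fun i => if i ∈ A₂ \ A₁ then w.1 i else none,
        (w.2, fun i => if i ∈ A₁ ∩ A₂ then w.1 i else none))) ?_ ?_
    · intro ω
      exact Prod.ext (masked_comb2b X A₁ A₂ ω) rfl
    · intro ω
      exact Prod.ext (masked_restrict X Finset.sdiff_subset ω)
        (Prod.ext rfl (masked_restrict X Finset.inter_subset_right ω))
  have e7 : entropy p (fun ω => ((masked X (A₁ \ A₂) ω, masked X (A₂ \ A₁) ω),
        (S ω, masked X (A₁ ∩ A₂) ω)))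
      = entropy p (fun ω => (masked X (A₁ ∪ A₂) ω, S ω)) := by
    refine entropy_eq_of_inv p _ _
      (fun w => (fun i => if i ∈ A₁ \ A₂ then w.1.1 i
          else if i ∈ A₂ \ A₁ then w.1.2 i else w.2.2 i, w.2.1))
      (fun w => ((fun i => if i ∈ A₁ \ A₂ then w.1 i else none,
          fun i => if i ∈ A₂ \ A₁ then w.1 i else none),
        (w.2, fun i => if i ∈ A₁ ∩ A₂ then w.1 i else none))) ?_ ?_
    · intro ω
      exact Prod.ext (masked_comb3 X A₁ A₂ ω) rfl
    · intro ω
      exact Prod.ext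
        (Prod.ext (masked_restrict X hsub1 ω) (masked_restrict X hsub2 ω))
        (Prod.ext rfl (masked_restrict X hsub3 ω))
  have e8 : entropy p (fun ω => (S ω, masked X (A₁ ∩ A₂) ω))
      = entropy p (fun ω => (masked X (A₁ ∩ A₂) ω, S ω)) :=
    entropy_eq_of_inv p _ _ Prod.swap Prod.swap (fun ω => rfl) (fun ω => rfl)
  rw [e1, e2, e3] at h1
  rw [e5, e6, e7, e8] at h2
  simp only [condEntropy]
  linarith
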